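/- For every n < ω, if κ is a C(n)-extendible cardinal, then κ belongs to C(n+2), i.e., V_κ is a Σ_{n+2}-elementary substructure of V. -/

import Mathlib

noncomputable section
open Classical

universe u

namespace ZFCMeta

/-! ### Finitary formulas of the language of set theory, with de Bruijn variables. -/

/-- Formulas of the (finitary, first-order) language of set theory.
Variables are natural-number indices; `ex`/`all` bind variable `0` and shift
the remaining variables, while `bex k φ`/`ball k φ` are the bounded quantifiers
`∃ x ∈ v k, φ` and `∀ x ∈ v k, φ` (again binding variable `0`). -/
inductive SetFml : Type
  | mem : ℕ → ℕ → SetFml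
  | eq : ℕ → ℕ → SetFml
  | not : SetFml → SetFml
  | and : SetFml → SetFml → SetFml
  | or : SetFml → SetFml → SetFml
  | ex : SetFml → SetFml
  | all : SetFml → SetFml
  | bex : ℕ → SetFml → SetFml
  | ball : ℕ → SetFml → SetFml

/-- Extend a variable assignment by a new value for variable `0`. -/
def push (x : ZFSet.{u}) (v : ℕ → ZFSet.{u}) : ℕ → ZFSet.{u} :=
  fun n => Nat.casesOn n x v

/-- Satisfaction of a set-theoretic formula, with all unbounded quantifiers
relativized to the class `M`. -/
def SetFml.SatIn (M : ZFSet.{u} → Prop) : SetFml → (ℕ → ZFSet.{u}) → Prop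
  | .mem i j, v => v i ∈ v j
  | .eq i j, v => v i = v j
  | .not φ, v => ¬ φ.SatIn M v
  | .and φ ψ, v => φ.SatIn M v ∧ ψ.SatIn M v
  | .or φ ψ, v => φ.SatIn M v ∨ ψ.SatIn M v
  | .ex φ, v => ∃ x, M x ∧ φ.SatIn M (push x v)
  | .all φ, v => ∀ x, M x → φ.SatIn M (push x v)
  | .bex k φ, v => ∃ x, x ∈ v k ∧ φ.SatIn M (push x v)
  | .ball k φ, v => ∀ x, x ∈ v k → φ.SatIn M (push x v)

/-- Satisfaction in the universe `V` of all sets. -/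
def SetFml.Sat (φ : SetFml) (v : ℕ → ZFSet.{u}) : Prop :=
  φ.SatIn (fun _ => True) v

/-! ### The Lévy hierarchy -/

/-- `Δ₀` (= `Σ₀` = `Π₀`) formulas: all quantifiers are bounded. -/
inductive IsDelta0 : SetFml → Prop
  | mem (i j : ℕ) : IsDelta0 (.mem i j)
  | eq (i j : ℕ) : IsDelta0 (.eq i j)
  | not {φ} : IsDelta0 φ → IsDelta0 (.not φ)
  | and {φ ψ} : IsDelta0 φ → IsDelta0 ψ → IsDelta0 (.and φ ψ)
  | or {φ ψ} : IsDelta0 φ → IsDelta0 ψ → IsDelta0 (.or φ ψ)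
  | bex (k : ℕ) {φ} : IsDelta0 φ → IsDelta0 (.bex k φ)
  | ball (k : ℕ) {φ} : IsDelta0 φ → IsDelta0 (.ball k φ)

/-- `m`-fold existential quantification. -/
def iterEx : ℕ → SetFml → SetFml
  | 0, φ => φ
  | m + 1, φ => .ex (iterEx m φ)

/-- `m`-fold universal quantification. -/
def iterAll : ℕ → SetFml → SetFml
  | 0, φ => φ
  | m + 1, φ => .all (iterAll m φ)

mutual
  /-- `Σₙ` formulas of the Lévy hierarchy. -/
  def IsSigma : ℕ → SetFml → Prop
    | 0, φ => IsDelta0 φ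
    | n + 1, φ => ∃ (m : ℕ) (ψ : SetFml), IsPi n ψ ∧ φ = iterEx m ψ
  /-- `Πₙ` formulas of the Lévy hierarchy. -/
  def IsPi : ℕ → SetFml → Prop
    | 0, φ => IsDelta0 φ
    | n + 1, φ => ∃ (m : ℕ) (ψ : SetFml), IsSigma n ψ ∧ φ = iterAll m ψ
end

/-! ### Definable classes -/

/-- The formula `φ`, with the set `p` of parameters (assigned to every variable
except variable `0`), defines the class `C`. -/
def DefinesClass (φ : SetFml) (p : ZFSet.{u}) (C : ZFSet.{u} → Prop) : Prop :=
  ∀ x, C x ↔ φ.Sat (fun n => if n = 0 then x else p)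

/-- The class `C` is **Σₙ**-definable (boldface: with a set of parameters). -/
def SigmaDefinable (n : ℕ) (C : ZFSet.{u} → Prop) : Prop :=
  ∃ (φ : SetFml) (p : ZFSet.{u}), IsSigma n φ ∧ DefinesClass φ p C

/-- The class `C` is **Πₙ**-definable (boldface: with a set of parameters). -/
def PiDefinable (n : ℕ) (C : ZFSet.{u} → Prop) : Prop :=
  ∃ (φ : SetFml) (p : ZFSet.{u}), IsPi n φ ∧ DefinesClass φ p C

/-- A class is proper if it is not the extension of a set. -/
def ProperClass (C : ZFSet.{u} → Prop) : Prop :=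
  ¬ ∃ s : ZFSet.{u}, ∀ x, C x ↔ x ∈ s

/-! ### Basic coded set theory -/

/-- A ZFC set is an ordinal iff it is transitive and all its members are transitive. -/
def IsOrd (x : ZFSet.{u}) : Prop :=
  x.IsTransitive ∧ ∀ y ∈ x, ZFSet.IsTransitive y

/-- Application of a ZFC-coded function (graph of Kuratowski pairs) to an argument. -/
def ZApp (f a : ZFSet.{u}) : ZFSet.{u} :=
  ZFSet.sUnion ((ZFSet.sUnion (ZFSet.sUnion f)).sep fun b => ZFSet.pair a b ∈ f)

/-- `f` is a ZFC-coded function with domain `α` (and arbitrary values). -/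
def IsFuncDom (α f : ZFSet.{u}) : Prop :=
  (∀ p ∈ f, ∃ a ∈ α, ∃ b, p = ZFSet.pair a b) ∧ ∀ a ∈ α, ∃! b, ZFSet.pair a b ∈ f

/-- First projection of a Kuratowski pair. -/
def π₁ (p : ZFSet.{u}) : ZFSet.{u} := ZFSet.sUnion (ZFSet.sInter p)

/-- Second projection of a Kuratowski pair. -/
def π₂ (p : ZFSet.{u}) : ZFSet.{u} :=
  if ZFSet.sUnion p = ZFSet.sInter p then π₁ p
  else ZFSet.sUnion ((ZFSet.sUnion p).sep fun x => x ∉ ZFSet.sInter p)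

/-- Domain of a coded function. -/
def ZDom (f : ZFSet.{u}) : ZFSet.{u} :=
  (ZFSet.sUnion (ZFSet.sUnion f)).sep fun a => ∃ b, ZFSet.pair a b ∈ f

/-- Range of a coded function. -/
def ZRan (f : ZFSet.{u}) : ZFSet.{u} :=
  (ZFSet.sUnion (ZFSet.sUnion f)).sep fun b => ∃ a, ZFSet.pair a b ∈ f

/-! ### Transitive classes, elementary embeddings of the universe, large cardinals -/

/-- A class `M` is transitive. -/
def IsTransClass (M : ZFSet.{u} → Prop) : Prop :=
  ∀ x y, M x → y ∈ x → M y

/-- `j` is an elementary embedding of the set-theoretic universe `V` into the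
class `M`: it takes values in `M` and preserves and reflects satisfaction of all
formulas of the language of set theory (relativized to `M` on the target side). -/
def IsElemEmbUniv (M : ZFSet.{u} → Prop) (j : ZFSet.{u} → ZFSet.{u}) : Prop :=
  (∀ x, M (j x)) ∧
    ∀ (φ : SetFml) (v : ℕ → ZFSet.{u}), φ.Sat v ↔ φ.SatIn M (fun n => j (v n))

/-- `j` has critical point (the rank of) the ordinal `k`: it fixes all ordinals of
smaller rank and moves `k`. -/
def IsCritPoint (j : ZFSet.{u} → ZFSet.{u}) (k : ZFSet.{u}) : Prop :=
  IsOrd k ∧ (∀ o : ZFSet.{u}, IsOrd o → o.rank < k.rank → j o = o) ∧ j k ≠ k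

/-- The class `M` is closed under sequences of length `≤ lam` (hence in particular
under sequences of length less than a limit `lam`): any coded function whose domain
is an ordinal of rank at most `lam` and whose values lie in `M` belongs to `M`. -/
def SeqClosed (M : ZFSet.{u} → Prop) (lam : Ordinal.{u}) : Prop :=
  ∀ α f : ZFSet.{u}, IsOrd α → α.rank ≤ lam → IsFuncDom α f →
    (∀ a ∈ α, M (ZApp f a)) → M f

/-- The class `M` is closed under sequences of length `< lam`. -/
def SeqClosedLT (M : ZFSet.{u} → Prop) (lam : Ordinal.{u}) : Prop :=
  ∀ α f : ZFSet.{u}, IsOrd α → α.rank < lam → IsFuncDom α f →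
    (∀ a ∈ α, M (ZApp f a)) → M f

/-- The ordinal `κ` is an infinite cardinal. -/
def IsInfCardO (κ : Ordinal.{u}) : Prop :=
  ∃ c : Cardinal.{u}, Cardinal.aleph0 ≤ c ∧ c.ord = κ

/-- `κ` is a supercompact cardinal: for every ordinal `lam` there is an elementary
embedding `j : V → M` with `M` transitive, critical point `κ`, `j κ > lam` and `M`
closed under `lam`-sequences. -/
def IsSupercompactO (κ : Ordinal.{u}) : Prop :=
  IsInfCardO κ ∧
  ∀ lam : Ordinal.{u}, ∃ (M : ZFSet.{u} → Prop) (j : ZFSet.{u} → ZFSet.{u}) (k : ZFSet.{u}),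
    IsTransClass M ∧ IsElemEmbUniv M j ∧ IsCritPoint j k ∧ k.rank = κ ∧
    lam < (j k).rank ∧ SeqClosed M lam

/-- There is a proper class of supercompact cardinals. -/
def ProperClassSupercompact : Prop :=
  ∀ o : Ordinal.{u}, ∃ κ : Ordinal.{u}, o < κ ∧ IsSupercompactO κ

/-! ### `H(κ)` via transitive closures -/

/-- The transitive closure of a ZFC set, as a class. -/
def InTransClosure (x : ZFSet.{u}) : ZFSet.{u} → Prop :=
  fun y => ∃ n : ℕ, y ∈ (ZFSet.sUnion)^[n] x

/-- `x ∈ H(κ)`: the transitive closure of `x` has cardinality less than `κ`. -/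
def MemH (κ : Cardinal.{u}) (x : ZFSet.{u}) : Prop :=
  Cardinal.mk {y : ZFSet.{u} // InTransClosure x y} < Cardinal.lift.{u + 1} κ

/-! ### Rank-relativized elementarity, `C(n)` and `C(n)`-extendibility -/

/-- Membership in `V_o` for a (meta-level) ordinal `o`. -/
def MemV (o : Ordinal.{u}) (x : ZFSet.{u}) : Prop := x.rank < o

/-- `j` is an elementary embedding `V_lam → V_mu` (formulated via the rank
relativizations of satisfaction). -/
def VElemEmb (lam mu : Ordinal.{u}) (j : ZFSet.{u} → ZFSet.{u}) : Prop :=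
  (∀ x : ZFSet.{u}, x.rank < lam → (j x).rank < mu) ∧
  ∀ (φ : SetFml) (v : ℕ → ZFSet.{u}), (∀ n, (v n).rank < lam) →
    (φ.SatIn (MemV lam) v ↔ φ.SatIn (MemV mu) (fun n => j (v n)))

/-- `κ ∈ C(n)`: `κ` is an infinite cardinal and `V_κ` is a `Σₙ`-elementary
substructure of the universe `V`. -/
def CC (n : ℕ) (κ : Ordinal.{u}) : Prop :=
  IsInfCardO κ ∧
  ∀ (φ : SetFml), IsSigma n φ → ∀ v : ℕ → ZFSet.{u}, (∀ i, (v i).rank < κ) →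
    (φ.Sat v ↔ φ.SatIn (MemV κ) v)

/-- `κ` is `lam`-`P`-extendible (for a class `P` of ordinals): there is `mu` with
`P mu` and an elementary embedding `j : V_lam → V_mu` with critical point `κ`,
`j κ > lam` and `P (j κ)`. -/
def IsLamExtendibleFor (P : Ordinal.{u} → Prop) (κ lam : Ordinal.{u}) : Prop :=
  ∃ (mu : Ordinal.{u}) (j : ZFSet.{u} → ZFSet.{u}) (k : ZFSet.{u}),
    P mu ∧ VElemEmb lam mu j ∧ IsOrd k ∧ k.rank = κ ∧
    (∀ o : ZFSet.{u}, IsOrd o → o.rank < κ → j o = o) ∧ j k ≠ k ∧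
    lam < (j k).rank ∧ P ((j k).rank)

/-- `κ` is an extendible cardinal. -/
def IsExtendible (κ : Ordinal.{u}) : Prop :=
  IsInfCardO κ ∧ ∀ lam : Ordinal.{u}, IsInfCardO lam → κ < lam →
    IsLamExtendibleFor (fun _ => True) κ lam

/-- `κ` is a `C(n)`-extendible cardinal. -/
def IsCnExtendible (n : ℕ) (κ : Ordinal.{u}) : Prop :=
  CC n κ ∧ ∀ lam : Ordinal.{u}, CC n lam → κ < lam → IsLamExtendibleFor (CC n) κ lam

/-- There is a proper class of `C(n)`-extendible cardinals. -/
def ProperClassCnExtendible (n : ℕ) : Prop :=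
  ∀ o : Ordinal.{u}, ∃ κ : Ordinal.{u}, o < κ ∧ IsCnExtendible n κ

end ZFCMeta

namespace ZFCMeta

/-! ## Auxiliary development -/

open SetFml in
/-- Quantifier-free (only bounded quantifiers) formulas, as a recursive predicate. -/
def QFree : SetFml → Prop
  | .mem _ _ => True
  | .eq _ _ => True
  | .not φ => QFree φ
  | .and φ ψ => QFree φ ∧ QFree ψ
  | .or φ ψ => QFree φ ∧ QFree ψ
  | .ex _ => False
  | .all _ => False
  | .bex _ φ => QFree φ
  | .ball _ φ => QFree φ

theorem qfree_absolute (φ : SetFml) (h : QFree φ) (M M' : ZFSet.{u} → Prop)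
    (v : ℕ → ZFSet.{u}) : φ.SatIn M v ↔ φ.SatIn M' v := by
  induction φ generalizing v with
  | mem i j => exact Iff.rfl
  | eq i j => exact Iff.rfl
  | not φ ih => exact not_congr (ih h _)
  | and φ ψ ih ih' => exact and_congr (ih h.1 _) (ih' h.2 _)
  | or φ ψ ih ih' => exact or_congr (ih h.1 _) (ih' h.2 _)
  | ex φ ih => exact absurd h not_false
  | all φ ih => exact absurd h not_false
  | bex k φ ih => exact exists_congr fun x => and_congr_right fun _ => ih h _
  | ball k φ ih => exact forall_congr' fun x => imp_congr_right fun _ => ih h _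

/-- A bound on the variables a formula reads. -/
def vbnd : SetFml → ℕ
  | .mem i j => max i j + 1
  | .eq i j => max i j + 1
  | .not φ => vbnd φ
  | .and φ ψ => max (vbnd φ) (vbnd ψ)
  | .or φ ψ => max (vbnd φ) (vbnd ψ)
  | .ex φ => vbnd φ - 1
  | .all φ => vbnd φ - 1
  | .bex k φ => max (k + 1) (vbnd φ - 1)
  | .ball k φ => max (k + 1) (vbnd φ - 1)

theorem push_agree {v v' : ℕ → ZFSet.{u}} {B : ℕ} (h : ∀ i < B, v i = v' i) (x : ZFSet.{u}) :
    ∀ i < B + 1, push x v i = push x v' i := by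
  intro i hi
  cases i with
  | zero => rfl
  | succ i => exact h i (by omega)

theorem satIn_agree (M : ZFSet.{u} → Prop) (φ : SetFml) :
    ∀ {v v' : ℕ → ZFSet.{u}}, (∀ i < vbnd φ, v i = v' i) → (φ.SatIn M v ↔ φ.SatIn M v') := by
  induction φ with
  | mem i j =>
    intro v v' h
    rw [show SetFml.SatIn M (.mem i j) v ↔ v i ∈ v j from Iff.rfl,
      show SetFml.SatIn M (.mem i j) v' ↔ v' i ∈ v' j from Iff.rfl,
      h i (by simp [vbnd] <;> omega) , h j (by simp [vbnd] <;> omega)]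
  | eq i j =>
    intro v v' h
    rw [show SetFml.SatIn M (.eq i j) v ↔ v i = v j from Iff.rfl,
      show SetFml.SatIn M (.eq i j) v' ↔ v' i = v' j from Iff.rfl,
      h i (by simp [vbnd] <;> omega), h j (by simp [vbnd] <;> omega)]
  | not φ ih => exact fun h => not_congr (ih h)
  | and φ ψ ih ih' =>
    intro v v' h
    exact and_congr (ih fun i hi => h i (by simp [vbnd]; omega))
      (ih' fun i hi => h i (by simp [vbnd]; omega))
  | or φ ψ ih ih' =>
    intro v v' h
    exact or_congr (ih fun i hi => h i (by simp [vbnd]; omega))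
      (ih' fun i hi => h i (by simp [vbnd]; omega))
  | ex φ ih =>
    intro v v' h
    refine exists_congr fun x => and_congr_right fun _ => ih ?_
    intro i hi
    cases i with
    | zero => rfl
    | succ i => exact h i (by simp only [vbnd]; omega)
  | all φ ih =>
    intro v v' h
    refine forall_congr' fun x => imp_congr_right fun _ => ih ?_
    intro i hi
    cases i with
    | zero => rfl
    | succ i => exact h i (by simp only [vbnd]; omega)
  | bex k φ ih =>
    intro v v' h
    rw [show SetFml.SatIn M (.bex k φ) v ↔ ∃ x, x ∈ v k ∧ φ.SatIn M (push x v) from Iff.rfl,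
      show SetFml.SatIn M (.bex k φ) v' ↔ ∃ x, x ∈ v' k ∧ φ.SatIn M (push x v') from Iff.rfl,
      h k (by simp only [vbnd]; omega)]
    refine exists_congr fun x => and_congr_right fun _ => ih ?_
    intro i hi
    cases i with
    | zero => rfl
    | succ i => exact h i (by simp only [vbnd]; omega)
  | ball k φ ih =>
    intro v v' h
    rw [show SetFml.SatIn M (.ball k φ) v ↔ ∀ x ∈ v k, φ.SatIn M (push x v) from Iff.rfl,
      show SetFml.SatIn M (.ball k φ) v' ↔ ∀ x ∈ v' k, φ.SatIn M (push x v') from Iff.rfl,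
      h k (by simp only [vbnd]; omega)]
    refine forall_congr' fun x => imp_congr_right fun _ => ih ?_
    intro i hi
    cases i with
    | zero => rfl
    | succ i => exact h i (by simp only [vbnd]; omega)

/-- Push a list of values (head pushed last, i.e. innermost quantifier first in the list). -/
def pushL (v : ℕ → ZFSet.{u}) : List ZFSet.{u} → (ℕ → ZFSet.{u})
  | [] => v
  | x :: xs => pushL (push x v) xs

theorem pushL_agree : ∀ (xs : List ZFSet.{u}) {v v' : ℕ → ZFSet.{u}} (B : ℕ),
    (∀ i < B, v i = v' i) → ∀ i, i < B + xs.length → pushL v xs i = pushL v' xs i := by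
  intro xs
  induction xs with
  | nil => exact fun B h i hi => h i (by simpa using hi)
  | cons x xs ih =>
    intro v v' B h i hi
    refine ih (B + 1) (push_agree h x) i ?_
    simp only [List.length_cons] at hi
    omega

theorem pushL_rank {c : Ordinal.{u}} {v : ℕ → ZFSet.{u}} (hv : ∀ i, (v i).rank < c) :
    ∀ (xs : List ZFSet.{u}), (∀ x ∈ xs, x.rank < c) → ∀ i, ((pushL v xs) i).rank < c := by
  intro xs
  induction xs generalizing v with
  | nil => exact fun _ => hv
  | cons x xs ih =>
    intro hxs i
    refine ih (fun j => ?_) (fun y hy => hxs y (by simp [hy])) i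
    cases j with
    | zero => exact hxs x (by simp)
    | succ j => exact hv j

theorem satIn_iterAll (M : ZFSet.{u} → Prop) (χ : SetFml) :
    ∀ (m : ℕ) (v : ℕ → ZFSet.{u}),
      (SetFml.SatIn M (iterAll m χ) v ↔
        ∀ xs : List ZFSet.{u}, xs.length = m → (∀ x ∈ xs, M x) → χ.SatIn M (pushL v xs)) := by
  intro m
  induction m with
  | zero =>
    intro v
    constructor
    · intro h xs hlen _
      rw [List.length_eq_zero_iff] at hlen
      subst hlen; exact h
    · intro h
      exact h [] rfl (by simp)
  | succ m ih =>
    intro v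
    constructor
    · rintro h (_ | ⟨x, xs⟩) hlen hM
      · simp at hlen
      · exact (ih (push x v)).1 (h x (hM x (by simp))) xs (by simpa using hlen)
          (fun y hy => hM y (by simp [hy]))
    · intro h x hx
      exact (ih (push x v)).2 fun xs hlen hM =>
        h (x :: xs) (by simp [hlen]) (fun y hy => by rcases List.mem_cons.1 hy with rfl | hy; exacts [hx, hM y hy])

theorem satIn_iterEx (M : ZFSet.{u} → Prop) (χ : SetFml) :
    ∀ (m : ℕ) (v : ℕ → ZFSet.{u}),
      (SetFml.SatIn M (iterEx m χ) v ↔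
        ∃ xs : List ZFSet.{u}, xs.length = m ∧ (∀ x ∈ xs, M x) ∧ χ.SatIn M (pushL v xs)) := by
  intro m
  induction m with
  | zero =>
    intro v
    constructor
    · intro h
      exact ⟨[], rfl, by simp, h⟩
    · rintro ⟨xs, hlen, _, h⟩
      rw [List.length_eq_zero_iff] at hlen
      subst hlen; exact h
  | succ m ih =>
    intro v
    constructor
    · rintro ⟨x, hx, h⟩
      obtain ⟨xs, hlen, hM, h⟩ := (ih (push x v)).1 h
      exact ⟨x :: xs, by simp [hlen], fun y hy => by rcases List.mem_cons.1 hy with rfl | hy; exacts [hx, hM y hy], h⟩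
    · rintro ⟨(_ | ⟨x, xs⟩), hlen, hM, h⟩
      · simp at hlen
      · exact ⟨x, hM x (by simp),
          (ih (push x v)).2 ⟨xs, by simpa using hlen, fun y hy => hM y (by simp [hy]), h⟩⟩

/-- Relativized block of universal quantifiers: all bound by the set in slot `N`. -/
def ballify (N : ℕ) : ℕ → SetFml → SetFml
  | 0, χ => χ
  | d + 1, χ => .ball N (ballify (N + 1) d χ)

/-- Relativized block of existential quantifiers. -/
def bexify (N : ℕ) : ℕ → SetFml → SetFml
  | 0, χ => χ
  | d + 1, χ => .bex N (bexify (N + 1) d χ)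

theorem satIn_ballify (M : ZFSet.{u} → Prop) (χ : SetFml) :
    ∀ (d N : ℕ) (v : ℕ → ZFSet.{u}),
      (SetFml.SatIn M (ballify N d χ) v ↔
        ∀ xs : List ZFSet.{u}, xs.length = d → (∀ x ∈ xs, x ∈ v N) → χ.SatIn M (pushL v xs)) := by
  intro d
  induction d with
  | zero =>
    intro N v
    constructor
    · intro h xs hlen _
      rw [List.length_eq_zero_iff] at hlen
      subst hlen; exact h
    · intro h; exact h [] rfl (by simp)
  | succ d ih =>
    intro N v
    constructor
    · rintro h (_ | ⟨x, xs⟩) hlen hM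
      · simp at hlen
      · exact (ih (N + 1) (push x v)).1 (h x (hM x (by simp))) xs (by simpa using hlen)
          (fun y hy => hM y (by simp [hy]))
    · intro h x hx
      exact (ih (N + 1) (push x v)).2 fun xs hlen hM =>
        h (x :: xs) (by simp [hlen]) (fun y hy => by rcases List.mem_cons.1 hy with rfl | hy; exacts [hx, hM y hy])

theorem satIn_bexify (M : ZFSet.{u} → Prop) (χ : SetFml) :
    ∀ (d N : ℕ) (v : ℕ → ZFSet.{u}),
      (SetFml.SatIn M (bexify N d χ) v ↔
        ∃ xs : List ZFSet.{u}, xs.length = d ∧ (∀ x ∈ xs, x ∈ v N) ∧ χ.SatIn M (pushL v xs)) := by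
  intro d
  induction d with
  | zero =>
    intro N v
    constructor
    · intro h; exact ⟨[], rfl, by simp, h⟩
    · rintro ⟨xs, hlen, _, h⟩
      rw [List.length_eq_zero_iff] at hlen
      subst hlen; exact h
  | succ d ih =>
    intro N v
    constructor
    · rintro ⟨x, hx, h⟩
      obtain ⟨xs, hlen, hM, h⟩ := (ih (N + 1) (push x v)).1 h
      exact ⟨x :: xs, by simp [hlen], fun y hy => by rcases List.mem_cons.1 hy with rfl | hy; exacts [hx, hM y hy], h⟩
    · rintro ⟨(_ | ⟨x, xs⟩), hlen, hM, h⟩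
      · simp at hlen
      · exact ⟨x, hM x (by simp),
          (ih (N + 1) (push x v)).2 ⟨xs, by simpa using hlen, fun y hy => hM y (by simp [hy]), h⟩⟩

/-! ### The cumulative hierarchy and von Neumann ordinals, internal to `ZFSet`. -/

/-- Auxiliary: the ordinal corresponding to an element of `α.ToType`. -/
noncomputable def tin {α : Ordinal.{u}} (i : α.ToType) : Ordinal.{u} :=
  @Ordinal.typein α.ToType (· < ·) isWellOrder_lt i

theorem tin_lt_self {α : Ordinal.{u}} (i : α.ToType) : tin i < α :=
  Ordinal.typein_lt_self i

theorem tin_surj {α β : Ordinal.{u}} (h : β < α) : ∃ i : α.ToType, tin i = β :=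
  @Ordinal.typein_surj α.ToType (· < ·) isWellOrder_lt β (by rwa [Ordinal.type_toType])

/-- The set of all sets of rank `< α`. -/
noncomputable def Vset : Ordinal.{u} → ZFSet.{u}
  | α => ZFSet.sUnion (ZFSet.range.{u, u} fun i : α.ToType => ZFSet.powerset (Vset (tin i)))
  termination_by α => α
  decreasing_by exact tin_lt_self i

theorem mem_Vset : ∀ (α : Ordinal.{u}) (z : ZFSet.{u}), z ∈ Vset α ↔ z.rank < α := by
  intro α
  induction α using Ordinal.induction with
  | h α ih =>
    intro z
    rw [Vset]
    simp only [ZFSet.mem_sUnion, ZFSet.mem_range, Set.mem_range]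
    constructor
    · rintro ⟨w, ⟨i, rfl⟩, hz⟩
      rw [ZFSet.mem_powerset] at hz
      have hβ := tin_lt_self i
      refine lt_of_le_of_lt ?_ hβ
      rw [ZFSet.rank_le_iff]
      intro y hy
      exact (ih _ hβ y).1 (hz hy)
    · intro hz
      obtain ⟨i, hi⟩ := tin_surj hz
      refine ⟨_, ⟨i, rfl⟩, ?_⟩
      rw [ZFSet.mem_powerset]
      intro y hy
      refine (ih _ (by rw [hi]; exact hz) y).2 ?_
      rw [hi]
      exact ZFSet.rank_lt_of_mem hy

theorem rank_Vset_le (α : Ordinal.{u}) : (Vset α).rank ≤ α :=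
  ZFSet.rank_le_iff.2 fun y hy => (mem_Vset α y).1 hy

/-- The canonical von Neumann ordinal of rank `α`. -/
noncomputable def ovn : Ordinal.{u} → ZFSet.{u}
  | α => ZFSet.range.{u, u} fun i : α.ToType => ovn (tin i)
  termination_by α => α
  decreasing_by exact tin_lt_self i

theorem mem_ovn (α : Ordinal.{u}) (z : ZFSet.{u}) : z ∈ ovn α ↔ ∃ β < α, z = ovn β := by
  rw [ovn]
  simp only [ZFSet.mem_range, Set.mem_range]
  constructor
  · rintro ⟨i, rfl⟩
    exact ⟨_, tin_lt_self i, rfl⟩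
  · rintro ⟨β, hβ, rfl⟩
    obtain ⟨i, hi⟩ := tin_surj hβ
    exact ⟨i, by rw [hi]⟩

theorem rank_ovn : ∀ α : Ordinal.{u}, (ovn α).rank = α := by
  intro α
  induction α using Ordinal.induction with
  | h α ih =>
    refine le_antisymm ?_ ?_
    · rw [ZFSet.rank_le_iff]
      intro y hy
      obtain ⟨β, hβ, rfl⟩ := (mem_ovn α y).1 hy
      rw [ih β hβ]
      exact hβ
    · refine le_of_forall_lt fun β hβ => ?_
      have : ovn β ∈ ovn α := (mem_ovn α _).2 ⟨β, hβ, rfl⟩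
      have := ZFSet.rank_lt_of_mem this
      rwa [ih β hβ] at this

theorem ovn_transitive (α : Ordinal.{u}) : (ovn α).IsTransitive := by
  intro y hy
  obtain ⟨β, hβ, rfl⟩ := (mem_ovn α y).1 hy
  intro z hz
  obtain ⟨γ, hγ, rfl⟩ := (mem_ovn β z).1 hz
  exact (mem_ovn α _).2 ⟨γ, hγ.trans hβ, rfl⟩

theorem isOrd_ovn (α : Ordinal.{u}) : IsOrd (ovn α) := by
  refine ⟨ovn_transitive α, fun y hy => ?_⟩
  obtain ⟨β, _, rfl⟩ := (mem_ovn α y).1 hy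
  exact ovn_transitive β

theorem isOrd_mem {o y : ZFSet.{u}} (ho : IsOrd o) (hy : y ∈ o) : IsOrd y :=
  ⟨ho.2 y hy, fun z hz => ho.2 z (ho.1 y hy hz)⟩

theorem isOrd_eq_ovn : ∀ o : ZFSet.{u}, IsOrd o → o = ovn o.rank := by
  intro o
  induction o using ZFSet.inductionOn with
  | h o ih =>
    intro ho
    apply ZFSet.ext
    intro z
    rw [mem_ovn]
    constructor
    · intro hz
      exact ⟨z.rank, ZFSet.rank_lt_of_mem hz, ih z hz (isOrd_mem ho hz)⟩
    · rintro ⟨β, hβ, rfl⟩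
      obtain ⟨y, hy, hle⟩ := ZFSet.lt_rank_iff.1 hβ
      rcases eq_or_lt_of_le hle with heq | hlt
      · rw [heq, ← ih y hy (isOrd_mem ho hy)]
        exact hy
      · have h1 : ovn β ∈ ovn y.rank := (mem_ovn _ _).2 ⟨β, hlt, rfl⟩
        rw [← ih y hy (isOrd_mem ho hy)] at h1
        exact ho.1 y hy h1

theorem ovn_mem_of_isOrd {o : ZFSet.{u}} (ho : IsOrd o) {β : Ordinal.{u}} (hβ : β < o.rank) :
    ovn β ∈ o := by
  have h1 := (mem_ovn o.rank (ovn β)).2 ⟨β, hβ, rfl⟩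
  rwa [← isOrd_eq_ovn o ho] at h1

/-! ### Transitive closure (including the set itself) -/

noncomputable def tcl (z : ZFSet.{u}) : ZFSet.{u} :=
  ZFSet.sUnion (ZFSet.range fun n : ULift.{u} ℕ => (ZFSet.sUnion)^[n.down] {z})

theorem mem_tcl {z x : ZFSet.{u}} : x ∈ tcl z ↔ ∃ n : ℕ, x ∈ (ZFSet.sUnion)^[n] ({z} : ZFSet.{u}) := by
  simp only [tcl, ZFSet.mem_sUnion, ZFSet.mem_range, Set.mem_range]
  constructor
  · rintro ⟨w, ⟨n, rfl⟩, hx⟩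
    exact ⟨n.down, hx⟩
  · rintro ⟨n, hx⟩
    exact ⟨_, ⟨ULift.up n, rfl⟩, hx⟩

theorem self_mem_tcl (z : ZFSet.{u}) : z ∈ tcl z :=
  mem_tcl.2 ⟨0, by simp⟩

theorem tcl_mem_trans {z p q : ZFSet.{u}} (hq : q ∈ p) (hp : p ∈ tcl z) : q ∈ tcl z := by
  obtain ⟨n, hp⟩ := mem_tcl.1 hp
  refine mem_tcl.2 ⟨n + 1, ?_⟩
  rw [Function.iterate_succ_apply']
  exact ZFSet.mem_sUnion.2 ⟨p, hp, hq⟩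

theorem tcl_rank_le_aux : ∀ (n : ℕ) (z p : ZFSet.{u}),
    p ∈ (ZFSet.sUnion)^[n] ({z} : ZFSet.{u}) → p.rank ≤ z.rank := by
  intro n
  induction n with
  | zero =>
    intro z p hp
    simp only [Function.iterate_zero, id_eq] at hp
    rw [ZFSet.mem_singleton] at hp
    exact hp ▸ le_rfl
  | succ n ih =>
    intro z p hp
    rw [Function.iterate_succ_apply'] at hp
    obtain ⟨w, hw, hpw⟩ := ZFSet.mem_sUnion.1 hp
    exact (ZFSet.rank_lt_of_mem hpw).le.trans (ih z w hw)

theorem tcl_rank_le {z p : ZFSet.{u}} (hp : p ∈ tcl z) : p.rank ≤ z.rank := by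
  obtain ⟨n, hp⟩ := mem_tcl.1 hp
  exact tcl_rank_le_aux n z p hp

/-! ### Rank certificates -/

/-- `F` certifies that the rank of `z` is less than the rank of `o`. -/
def Cert (F z o : ZFSet.{u}) : Prop :=
  (∃ t ∈ F, ∃ b ∈ o, t = ZFSet.pair z b) ∧
  ∀ t ∈ F, ∀ s ∈ t, ∀ p ∈ s, ∀ s' ∈ t, ∀ b ∈ s', t = ZFSet.pair p b →
    ∀ q ∈ p, ∃ t' ∈ F, ∃ b' ∈ b, t' = ZFSet.pair q b'

theorem singleton_mem_pair (p b : ZFSet.{u}) : ({p} : ZFSet.{u}) ∈ ZFSet.pair p b := by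
  simp [ZFSet.pair, ZFSet.mem_pair]

theorem doubleton_mem_pair (p b : ZFSet.{u}) : ({p, b} : ZFSet.{u}) ∈ ZFSet.pair p b := by
  simp [ZFSet.pair, ZFSet.mem_pair]

theorem cert_key {F : ZFSet.{u}}
    (h2 : ∀ t ∈ F, ∀ s ∈ t, ∀ p ∈ s, ∀ s' ∈ t, ∀ b ∈ s', t = ZFSet.pair p b →
      ∀ q ∈ p, ∃ t' ∈ F, ∃ b' ∈ b, t' = ZFSet.pair q b') :
    ∀ p : ZFSet.{u}, ∀ b : ZFSet.{u}, ZFSet.pair p b ∈ F → p.rank ≤ b.rank := by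
  intro p
  induction p using ZFSet.inductionOn with
  | h p ih =>
    intro b hpb
    rw [ZFSet.rank_le_iff]
    intro q hq
    obtain ⟨t', ht', b', hb', rfl⟩ := h2 _ hpb {p} (singleton_mem_pair p b) p
      (ZFSet.mem_singleton.2 rfl) {p, b} (doubleton_mem_pair p b) b
      (ZFSet.mem_pair.2 (Or.inr rfl)) rfl q hq
    exact lt_of_le_of_lt (ih q hq b' ht') (ZFSet.rank_lt_of_mem hb')

theorem cert_sound {F z o : ZFSet.{u}} (h : Cert F z o) : z.rank < o.rank := by
  obtain ⟨⟨t, ht, b, hb, rfl⟩, h2⟩ := h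
  exact lt_of_le_of_lt (cert_key h2 z b ht) (ZFSet.rank_lt_of_mem hb)

theorem cert_complete {z o : ZFSet.{u}} (ho : IsOrd o) (hz : z.rank < o.rank) :
    ∃ F : ZFSet.{u}, Cert F z o ∧ F.rank ≤ Order.succ (Order.succ (Order.succ z.rank)) := by
  letI : ZFSet.Definable₁ (fun p : ZFSet.{u} => ZFSet.pair p (ovn p.rank)) :=
    Classical.allZFSetDefinable _
  refine ⟨ZFSet.image (fun p : ZFSet.{u} => ZFSet.pair p (ovn p.rank)) (tcl z), ⟨?_, ?_⟩, ?_⟩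
  · exact ⟨ZFSet.pair z (ovn z.rank), ZFSet.mem_image.2 ⟨z, self_mem_tcl z, rfl⟩,
      ovn z.rank, ovn_mem_of_isOrd ho hz, rfl⟩
  · intro t ht s _ p _ s' _ b _ heq q hq
    obtain ⟨p₀, hp₀, rfl⟩ := ZFSet.mem_image.1 ht
    obtain ⟨rfl, rfl⟩ := ZFSet.pair_injective heq
    exact ⟨ZFSet.pair q (ovn q.rank), ZFSet.mem_image.2 ⟨q, tcl_mem_trans hq hp₀, rfl⟩,
      ovn q.rank, (mem_ovn _ _).2 ⟨q.rank, ZFSet.rank_lt_of_mem hq, rfl⟩, rfl⟩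
  · rw [ZFSet.rank_le_iff]
    intro t ht
    obtain ⟨p, hp, rfl⟩ := ZFSet.mem_image.1 ht
    have h1 : (ZFSet.pair p (ovn p.rank)).rank = Order.succ (Order.succ p.rank) := by
      simp [ZFSet.pair, ZFSet.rank_pair, ZFSet.rank_singleton, rank_ovn]
    rw [Order.lt_succ_iff, h1]
    exact Order.succ_le_succ (Order.succ_le_succ (tcl_rank_le hp))

/-! ### A reflection theorem: unboundedly many fully elementary rank-levels. -/

theorem mem_Vset_toSet {α : Ordinal.{u}} {x : ZFSet.{u}} :
    x ∈ (Vset α).toSet ↔ x.rank < α := by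
  exact mem_Vset α x

/-- A witness for an existential statement, if one exists. -/
noncomputable def wit (φ : SetFml) (g : ℕ → ZFSet.{u}) : ZFSet.{u} :=
  if h : ∃ x : ZFSet.{u}, φ.Sat (push x g) then h.choose else ∅

/-- A counterexample to a universal statement, if one exists. -/
noncomputable def cwit (φ : SetFml) (g : ℕ → ZFSet.{u}) : ZFSet.{u} :=
  if h : ∃ x : ZFSet.{u}, ¬ φ.Sat (push x g) then h.choose else ∅

theorem wit_spec {φ : SetFml} {g : ℕ → ZFSet.{u}} (h : ∃ x : ZFSet.{u}, φ.Sat (push x g)) :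
    φ.Sat (push (wit φ g) g) := by
  rw [wit, dif_pos h]; exact h.choose_spec

theorem cwit_spec {φ : SetFml} {g : ℕ → ZFSet.{u}} (h : ∃ x : ZFSet.{u}, ¬ φ.Sat (push x g)) :
    ¬ φ.Sat (push (cwit φ g) g) := by
  rw [cwit, dif_pos h]; exact h.choose_spec

/-- One step of the reflection construction. -/
noncomputable def RefStep (α : Ordinal.{u}) : Ordinal.{u} :=
  sSup (Set.range (fun p : SetFml × (ℕ → (Vset α).toSet) =>
    max ((wit p.1 (fun i => (p.2 i).1)).rank) ((cwit p.1 (fun i => (p.2 i).1)).rank) + 1))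

theorem refStep_bound {α : Ordinal.{u}} (φ : SetFml) (g : ℕ → ZFSet.{u})
    (hg : ∀ i, (g i).rank < α) :
    (wit φ g).rank < RefStep α ∧ (cwit φ g).rank < RefStep α := by
  have hmem : (max ((wit φ g).rank) ((cwit φ g).rank) + 1) ∈
      Set.range (fun p : SetFml × (ℕ → (Vset α).toSet) =>
        max ((wit p.1 (fun i => (p.2 i).1)).rank) ((cwit p.1 (fun i => (p.2 i).1)).rank) + 1) :=
    ⟨⟨φ, fun i => ⟨g i, mem_Vset_toSet.2 (hg i)⟩⟩, rfl⟩
  haveI : Small.{u} (Vset α).toSet := ZFSet.small_coe (Vset α)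
  have hle := le_csSup (@Ordinal.bddAbove_of_small _ (small_range _)) hmem
  constructor
  · exact lt_of_lt_of_le (lt_of_le_of_lt (le_max_left _ _) (Order.lt_succ _))
      (by rwa [Ordinal.add_one_eq_succ] at hle)
  · exact lt_of_lt_of_le (lt_of_le_of_lt (le_max_right _ _) (Order.lt_succ _))
      (by rwa [Ordinal.add_one_eq_succ] at hle)

/-- The cardinal chain whose limit is the reflecting level. -/
noncomputable def refC (o : Ordinal.{u}) : ℕ → Cardinal.{u}
  | 0 => Order.succ (max Cardinal.aleph0 o.card)
  | n + 1 => Order.succ (max (refC o n) (RefStep ((refC o n).ord)).card)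

/-- The reflecting level above `o`. -/
noncomputable def Lam (o : Ordinal.{u}) : Ordinal.{u} :=
  (⨆ n, refC o n).ord

theorem refC_lt_succ (o : Ordinal.{u}) (n : ℕ) : refC o n < refC o (n + 1) :=
  lt_of_le_of_lt (le_max_left _ _) (by rw [refC]; exact Order.lt_succ _)

theorem refC_mono (o : Ordinal.{u}) : StrictMono (refC o) :=
  strictMono_nat_of_lt_succ (refC_lt_succ o)

theorem aleph0_le_refC (o : Ordinal.{u}) (n : ℕ) : Cardinal.aleph0 ≤ refC o n := by
  induction n with
  | zero => exact le_trans (le_max_left _ _) (Order.le_succ _)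
  | succ n ih => exact le_trans ih (refC_lt_succ o n).le

theorem lam_isInfCard (o : Ordinal.{u}) : IsInfCardO (Lam o) :=
  ⟨⨆ n, refC o n,
    le_trans (aleph0_le_refC o 0) (le_ciSup (Cardinal.bddAbove_range _) 0), rfl⟩

theorem refC_ord_le_lam (o : Ordinal.{u}) (n : ℕ) : (refC o n).ord ≤ Lam o :=
  Cardinal.ord_le_ord.2 (le_ciSup (Cardinal.bddAbove_range _) n)

theorem lt_lam (o : Ordinal.{u}) : o < Lam o := by
  rw [Lam, Cardinal.lt_ord]
  exact lt_of_lt_of_le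
    (lt_of_le_of_lt (le_max_right _ _) (Order.lt_succ _) :
      o.card < refC o 0)
    (le_ciSup (Cardinal.bddAbove_range _) 0)

theorem refStep_lt_lam (o : Ordinal.{u}) (n : ℕ) : RefStep ((refC o n).ord) < Lam o := by
  refine lt_of_lt_of_le ?_ (refC_ord_le_lam o (n + 1))
  rw [Cardinal.lt_ord]
  exact lt_of_le_of_lt (le_max_right _ _) (by rw [refC]; exact Order.lt_succ _)

theorem exists_stage (o : Ordinal.{u}) {β : Ordinal.{u}} (hβ : β < Lam o) :
    ∃ n, β < (refC o n).ord := by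
  rw [Lam, Cardinal.lt_ord] at hβ
  by_contra hc
  push_neg at hc
  exact absurd (ciSup_le' fun n => Cardinal.ord_le.1 (hc n)) (not_le.2 hβ)

theorem exists_stage_fin (o : Ordinal.{u}) (v : ℕ → ZFSet.{u})
    (hv : ∀ i, (v i).rank < Lam o) (B : ℕ) :
    ∃ n, ∀ i, i < B → (v i).rank < (refC o n).ord := by
  induction B with
  | zero => exact ⟨0, fun i hi => absurd hi (Nat.not_lt_zero i)⟩
  | succ B ih =>
    obtain ⟨n₁, hn₁⟩ := ih
    obtain ⟨n₂, hn₂⟩ := exists_stage o (hv B)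
    refine ⟨max n₁ n₂, fun i hi => ?_⟩
    have hord : ∀ m m' : ℕ, m ≤ m' → (refC o m).ord ≤ (refC o m').ord := fun m m' h =>
      Cardinal.ord_le_ord.2 ((refC_mono o).monotone h)
    rcases Nat.lt_succ_iff_lt_or_eq.1 hi with hi | rfl
    · exact lt_of_lt_of_le (hn₁ i hi) (hord _ _ (le_max_left _ _))
    · exact lt_of_lt_of_le hn₂ (hord _ _ (le_max_right _ _))

theorem zero_lt_refC_ord (o : Ordinal.{u}) (n : ℕ) : 0 < (refC o n).ord := by
  rw [Cardinal.lt_ord, Ordinal.card_zero]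
  exact lt_of_lt_of_le Cardinal.aleph0_pos (aleph0_le_refC o n)

theorem lam_reflects (o : Ordinal.{u}) :
    ∀ (φ : SetFml) (v : ℕ → ZFSet.{u}), (∀ i, (v i).rank < Lam o) →
      (φ.Sat v ↔ φ.SatIn (MemV (Lam o)) v) := by
  have push_rank : ∀ {x : ZFSet.{u}} {v : ℕ → ZFSet.{u}} {c : Ordinal.{u}},
      x.rank < c → (∀ i, (v i).rank < c) → ∀ i, ((push x v) i).rank < c := by
    intro x v c hx hv i
    cases i with
    | zero => exact hx
    | succ i => exact hv i
  intro φ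
  induction φ with
  | mem i j => exact fun v hv => Iff.rfl
  | eq i j => exact fun v hv => Iff.rfl
  | not φ ih => exact fun v hv => not_congr (ih v hv)
  | and φ ψ ih ih' => exact fun v hv => and_congr (ih v hv) (ih' v hv)
  | or φ ψ ih ih' => exact fun v hv => or_congr (ih v hv) (ih' v hv)
  | bex k φ ih =>
    intro v hv
    exact exists_congr fun x => and_congr_right fun hx =>
      ih (push x v) (push_rank (lt_trans (ZFSet.rank_lt_of_mem hx) (hv k)) hv)
  | ball k φ ih =>
    intro v hv
    exact forall_congr' fun x => imp_congr_right fun hx =>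
      ih (push x v) (push_rank (lt_trans (ZFSet.rank_lt_of_mem hx) (hv k)) hv)
  | ex φ ih =>
    intro v hv
    -- truncated valuation
    obtain ⟨n, hn⟩ := exists_stage_fin o v hv (vbnd φ)
    set tv : ℕ → ZFSet.{u} := fun i => if i + 1 < vbnd φ then v i else ∅ with htv
    have htvrank : ∀ i, (tv i).rank < (refC o n).ord := by
      intro i
      rw [htv]
      dsimp only
      split
      · exact hn i (by omega)
      · rw [ZFSet.rank_empty]; exact zero_lt_refC_ord o n
    have hagree : ∀ x : ZFSet.{u}, ∀ i, i < vbnd φ → push x v i = push x tv i := by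
      intro x i hi
      cases i with
      | zero => rfl
      | succ i => rw [htv]; dsimp only [push]; rw [if_pos hi]
    constructor
    · rintro ⟨x, -, hx⟩
      have hsat : φ.Sat (push x tv) :=
        (satIn_agree _ φ (hagree x)).1 hx
      have hspec := wit_spec ⟨x, hsat⟩
      have hrank : (wit φ tv).rank < Lam o :=
        lt_of_lt_of_le (refStep_bound φ tv htvrank).1 (refStep_lt_lam o n).le
      have hsat2 : φ.Sat (push (wit φ tv) v) :=
        (satIn_agree _ φ (hagree (wit φ tv))).2 hspec
      exact ⟨wit φ tv, hrank, (ih (push (wit φ tv) v) (push_rank hrank hv)).1 hsat2⟩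
    · rintro ⟨x, hx, hsat⟩
      exact ⟨x, trivial, (ih (push x v) (push_rank hx hv)).2 hsat⟩
  | all φ ih =>
    intro v hv
    obtain ⟨n, hn⟩ := exists_stage_fin o v hv (vbnd φ)
    set tv : ℕ → ZFSet.{u} := fun i => if i + 1 < vbnd φ then v i else ∅ with htv
    have htvrank : ∀ i, (tv i).rank < (refC o n).ord := by
      intro i
      rw [htv]
      dsimp only
      split
      · exact hn i (by omega)
      · rw [ZFSet.rank_empty]; exact zero_lt_refC_ord o n
    have hagree : ∀ x : ZFSet.{u}, ∀ i, i < vbnd φ → push x v i = push x tv i := by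
      intro x i hi
      cases i with
      | zero => rfl
      | succ i => rw [htv]; dsimp only [push]; rw [if_pos hi]
    constructor
    · intro h x hx
      exact (ih (push x v) (push_rank hx hv)).1 (h x trivial)
    · intro h
      intro x _
      by_contra hc
      have hcc : ∃ y : ZFSet.{u}, ¬ φ.Sat (push y tv) :=
        ⟨x, fun hs => hc ((satIn_agree _ φ (hagree x)).2 hs)⟩
      have hspec := cwit_spec hcc
      have hrank : (cwit φ tv).rank < Lam o :=
        lt_of_lt_of_le (refStep_bound φ tv htvrank).2 (refStep_lt_lam o n).le
      have hsatIn := h (cwit φ tv) hrank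
      have hsat := (ih (push (cwit φ tv) v) (push_rank hrank hv)).2 hsatIn
      exact hspec ((satIn_agree _ φ (hagree (cwit φ tv))).1 hsat)

theorem lam_CC (o : Ordinal.{u}) (n : ℕ) : CC n (Lam o) :=
  ⟨lam_isInfCard o, fun φ _ v hv => lam_reflects o φ v hv⟩

/-! ### Concrete internal formulas and their semantics -/

theorem push_app (x : ZFSet.{u}) (v : ℕ → ZFSet.{u}) (n : ℕ) : push x v (n + 1) = v n := rfl

theorem push_zero' (x : ZFSet.{u}) (v : ℕ → ZFSet.{u}) : push x v 0 = x := rfl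

/-- `s = {p}` -/
def sglFml (s p : ℕ) : SetFml :=
  .and (.mem p s) (.ball s (.eq 0 (p + 1)))

/-- `s = {p, b}` -/
def uprFml (s p b : ℕ) : SetFml :=
  .and (.and (.mem p s) (.mem b s)) (.ball s (.or (.eq 0 (p + 1)) (.eq 0 (b + 1))))

/-- `t = ⟨p, b⟩` (Kuratowski pair) -/
def pairFml (t p b : ℕ) : SetFml :=
  .and (.and (.bex t (sglFml 0 (p + 1))) (.bex t (uprFml 0 (p + 1) (b + 1))))
    (.ball t (.or (sglFml 0 (p + 1)) (uprFml 0 (p + 1) (b + 1))))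


theorem sgl_char {x a : ZFSet.{u}} : (a ∈ x ∧ ∀ y ∈ x, y = a) ↔ x = {a} := by
  constructor
  · rintro ⟨h1, h2⟩
    exact ZFSet.ext fun z => ⟨fun hz => ZFSet.mem_singleton.2 (h2 z hz),
      fun hz => (ZFSet.mem_singleton.1 hz).symm ▸ h1⟩
  · rintro rfl
    exact ⟨ZFSet.mem_singleton.2 rfl, fun y hy => ZFSet.mem_singleton.1 hy⟩

theorem upr_char {x a b : ZFSet.{u}} :
    ((a ∈ x ∧ b ∈ x) ∧ ∀ y ∈ x, y = a ∨ y = b) ↔ x = {a, b} := by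
  constructor
  · rintro ⟨⟨h1, h2⟩, h3⟩
    exact ZFSet.ext fun z => ⟨fun hz => ZFSet.mem_pair.2 (h3 z hz),
      fun hz => by rcases ZFSet.mem_pair.1 hz with rfl | rfl <;> assumption⟩
  · rintro rfl
    exact ⟨⟨ZFSet.mem_pair.2 (Or.inl rfl), ZFSet.mem_pair.2 (Or.inr rfl)⟩,
      fun y hy => ZFSet.mem_pair.1 hy⟩

theorem mem_zpair {z a b : ZFSet.{u}} : z ∈ ZFSet.pair a b ↔ z = {a} ∨ z = {a, b} := by
  simp [ZFSet.pair, ZFSet.mem_pair]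

theorem pair_char {t a b : ZFSet.{u}} :
    ((∃ x ∈ t, x = {a}) ∧ ∃ x ∈ t, x = {a, b}) ∧ (∀ x ∈ t, x = {a} ∨ x = {a, b}) ↔
      t = ZFSet.pair a b := by
  constructor
  · rintro ⟨⟨⟨x1, hx1, rfl⟩, ⟨x2, hx2, rfl⟩⟩, h3⟩
    exact ZFSet.ext fun z => ⟨fun hz => mem_zpair.2 (h3 z hz), fun hz => by
      rcases mem_zpair.1 hz with rfl | rfl <;> assumption⟩
  · rintro rfl
    exact ⟨⟨⟨{a}, mem_zpair.2 (Or.inl rfl), rfl⟩, ⟨{a, b}, mem_zpair.2 (Or.inr rfl), rfl⟩⟩,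
      fun z hz => mem_zpair.1 hz⟩

theorem satIn_sglFml (M : ZFSet.{u} → Prop) (s p : ℕ) (v : ℕ → ZFSet.{u}) :
    SetFml.SatIn M (sglFml s p) v ↔ v s = {v p} := by
  simp only [sglFml, SetFml.SatIn, push_app, push_zero', sgl_char]

theorem satIn_uprFml (M : ZFSet.{u} → Prop) (s p b : ℕ) (v : ℕ → ZFSet.{u}) :
    SetFml.SatIn M (uprFml s p b) v ↔ v s = {v p, v b} := by
  simp only [uprFml, SetFml.SatIn, push_app, push_zero', upr_char]

theorem satIn_pairFml (M : ZFSet.{u} → Prop) (t p b : ℕ) (v : ℕ → ZFSet.{u}) :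
    SetFml.SatIn M (pairFml t p b) v ↔ v t = ZFSet.pair (v p) (v b) := by
  simp only [pairFml, sglFml, uprFml, SetFml.SatIn, push_app, push_zero', sgl_char, upr_char,
    pair_char]

/-- The certificate formula, with `f` at slot 0, `z` at slot 1, `o` at slot 4. -/
def deltaFml : SetFml :=
  .and (.bex 0 (.bex 5 (pairFml 1 3 0)))
    (.ball 0 (.ball 0 (.ball 0 (.ball 2 (.ball 0 (.or (.not (pairFml 4 2 0))
      (.ball 2 (.bex 6 (.bex 2 (pairFml 1 2 0))))))))))

theorem satIn_deltaFml (M : ZFSet.{u} → Prop) (v : ℕ → ZFSet.{u}) :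
    SetFml.SatIn M deltaFml v ↔ Cert (v 0) (v 1) (v 4) := by
  simp only [deltaFml, pairFml, sglFml, uprFml, SetFml.SatIn, push_app, push_zero', sgl_char,
    upr_char, pair_char, Cert, ← imp_iff_not_or]

/-- `∀ t ∈ (slot 1), ∃ f, Cert f t (slot 2)` -/
def certAllFml : SetFml := .ball 1 (.ex deltaFml)

theorem satIn_certAllFml (M : ZFSet.{u} → Prop) (v : ℕ → ZFSet.{u}) :
    SetFml.SatIn M certAllFml v ↔ ∀ t ∈ v 1, ∃ f, M f ∧ Cert f t (v 2) := by
  show (∀ t, t ∈ v 1 → ∃ f, M f ∧ SetFml.SatIn M deltaFml (push f (push t v))) ↔ _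
  refine forall_congr' fun t => imp_congr_right fun _ => exists_congr fun f =>
    and_congr_right fun _ => ?_
  exact satIn_deltaFml M (push f (push t v))

/-- `∀ z, (∃ f, Cert f z (slot 2)) → z ∈ (slot 1)` -/
def certBoundFml : SetFml := .all (.or (.not (.ex deltaFml)) (.mem 0 2))

theorem satIn_certBoundFml (M : ZFSet.{u} → Prop) (v : ℕ → ZFSet.{u}) :
    SetFml.SatIn M certBoundFml v ↔
      ∀ z, M z → (¬ ∃ f, M f ∧ Cert f z (v 2)) ∨ z ∈ v 1 := by
  show (∀ z, M z → (¬ ∃ f, M f ∧ SetFml.SatIn M deltaFml (push f (push z v))) ∨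
      (push z v) 0 ∈ (push z v) 2) ↔ _
  refine forall_congr' fun z => imp_congr_right fun _ =>
    or_congr (not_congr (exists_congr fun f => and_congr_right fun _ => ?_)) Iff.rfl
  exact satIn_deltaFml M (push f (push z v))

/-- `slot 1 ⊆ slot 2` -/
def subFml : SetFml := .ball 1 (.mem 0 3)

theorem satIn_subFml (M : ZFSet.{u} → Prop) (v : ℕ → ZFSet.{u}) :
    SetFml.SatIn M subFml v ↔ ∀ z ∈ v 1, z ∈ v 2 := by
  simp only [subFml, SetFml.SatIn, push_app, push_zero']

/-- `slot 1 is an ordinal` -/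
def ordFml : SetFml :=
  .and (.ball 1 (.ball 0 (.mem 0 3))) (.ball 1 (.ball 0 (.ball 0 (.mem 0 2))))

theorem satIn_ordFml (M : ZFSet.{u} → Prop) (v : ℕ → ZFSet.{u}) :
    SetFml.SatIn M ordFml v ↔ IsOrd (v 1) := by
  simp only [ordFml, SetFml.SatIn, push_app, push_zero', IsOrd, ZFSet.IsTransitive]
  constructor
  · rintro ⟨h1, h2⟩
    exact ⟨fun y hy z hz => h1 y hy z hz, fun y hy z hz u hu => h2 y hy z hz u hu⟩
  · rintro ⟨h1, h2⟩
    exact ⟨fun y hy z hz => h1 y hy hz, fun y hy z hz u hu => h2 y hy z hz hu⟩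

/-- `slot 0 ∈ slot 1` -/
theorem satIn_memFml (M : ZFSet.{u} → Prop) (v : ℕ → ZFSet.{u}) :
    SetFml.SatIn M (.mem 0 1) v ↔ v 0 ∈ v 1 := Iff.rfl

/-! ### Consequences of elementary embeddings between rank-initial segments -/

theorem isInfCardO_isLimit {κ : Ordinal.{u}} (h : IsInfCardO κ) : Order.IsSuccLimit κ := by
  obtain ⟨c, hc, rfl⟩ := h
  exact Cardinal.isSuccLimit_ord hc

theorem succ3_lt {lam β : Ordinal.{u}} (hl : Order.IsSuccLimit lam) (h : β < lam) :
    Order.succ (Order.succ (Order.succ β)) < lam :=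
  hl.succ_lt (hl.succ_lt (hl.succ_lt h))

theorem je_mem {lam mu : Ordinal.{u}} {j : ZFSet.{u} → ZFSet.{u}} (hj : VElemEmb lam mu j)
    {x y : ZFSet.{u}} (hx : x.rank < lam) (hy : y.rank < lam) : x ∈ y ↔ j x ∈ j y := by
  have h := hj.2 (.mem 0 1) (push x (fun _ => y)) (fun i => by
    cases i with
    | zero => exact hx
    | succ i => exact hy)
  exact h

theorem je_sub {lam mu : Ordinal.{u}} {j : ZFSet.{u} → ZFSet.{u}} (hj : VElemEmb lam mu j)
    (h0 : (0 : Ordinal.{u}) < lam) {x y : ZFSet.{u}} (hx : x.rank < lam) (hy : y.rank < lam)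
    (hxy : x ⊆ y) : j x ⊆ j y := by
  have hvr : ∀ i, ((push ∅ (push x (fun _ => y)) : ℕ → ZFSet.{u}) i).rank < lam := by
    intro i
    match i with
    | 0 => rw [show (push ∅ (push x (fun _ => y)) : ℕ → ZFSet.{u}) 0 = ∅ from rfl,
        ZFSet.rank_empty]; exact h0
    | 1 => exact hx
    | (i+2) => exact hy
  have h := (hj.2 subFml _ hvr).1 ((satIn_subFml _ _).2 fun z hz => hxy hz)
  rw [satIn_subFml] at h
  exact ZFSet.subset_def.2 fun z hz => h z hz

theorem je_isOrd {lam mu : Ordinal.{u}} {j : ZFSet.{u} → ZFSet.{u}} (hj : VElemEmb lam mu j)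
    (h0 : (0 : Ordinal.{u}) < lam) {k : ZFSet.{u}} (hk : IsOrd k) (hkr : k.rank < lam) :
    IsOrd (j k) := by
  have hvr : ∀ i, ((push ∅ (push k (fun _ => ∅)) : ℕ → ZFSet.{u}) i).rank < lam := by
    intro i
    match i with
    | 0 => rw [show (push ∅ (push k (fun _ => ∅)) : ℕ → ZFSet.{u}) 0 = ∅ from rfl,
        ZFSet.rank_empty]; exact h0
    | 1 => exact hkr
    | (i+2) => rw [show (push ∅ (push k (fun _ => ∅)) : ℕ → ZFSet.{u}) (i+2) = ∅ from rfl,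
        ZFSet.rank_empty]; exact h0
  have h := (hj.2 ordFml _ hvr).1 ((satIn_ordFml _ _).2 hk)
  rw [satIn_ordFml] at h
  exact h

theorem jVset_core {lam mu : Ordinal.{u}} {j : ZFSet.{u} → ZFSet.{u}} (hj : VElemEmb lam mu j)
    (hlam : Order.IsSuccLimit lam) (hmu : Order.IsSuccLimit mu) {o' : ZFSet.{u}} (ho' : IsOrd o')
    (hro' : o'.rank < lam) : j (Vset o'.rank) = Vset ((j o').rank) := by
  have h0 : (0 : Ordinal.{u}) < lam := hlam.pos
  have hwr : (Vset o'.rank).rank < lam := lt_of_le_of_lt (rank_Vset_le _) hro'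
  set v : ℕ → ZFSet.{u} := push ∅ (push (Vset o'.rank) (fun _ => o')) with hv
  have hvr : ∀ i, (v i).rank < lam := by
    intro i
    match i with
    | 0 => rw [show v 0 = ∅ from rfl, ZFSet.rank_empty]; exact h0
    | 1 => exact hwr
    | (i+2) => exact hro'
  have hjord : IsOrd (j o') := je_isOrd hj h0 ho' hro'
  have hjro' : (j o').rank < mu := hj.1 o' hro'
  -- forward inclusion via certAllFml
  have hΦ1L : SetFml.SatIn (MemV lam) certAllFml v := by
    rw [satIn_certAllFml]
    intro t ht
    have htr : t.rank < o'.rank := (mem_Vset _ t).1 ht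
    obtain ⟨F, hF, hFr⟩ := cert_complete ho' htr
    exact ⟨F, lt_of_le_of_lt hFr (succ3_lt hlam (htr.trans hro')), hF⟩
  have hΦ1R := (hj.2 certAllFml v hvr).1 hΦ1L
  rw [satIn_certAllFml] at hΦ1R
  have hsub1 : ∀ t, t ∈ j (Vset o'.rank) → t ∈ Vset ((j o').rank) := by
    intro t ht
    obtain ⟨f, _, hc⟩ := hΦ1R t ht
    exact (mem_Vset _ t).2 (cert_sound hc)
  -- backward inclusion via certBoundFml
  have hΦ2L : SetFml.SatIn (MemV lam) certBoundFml v := by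
    rw [satIn_certBoundFml]
    intro z _
    by_cases hcase : ∃ f, MemV lam f ∧ Cert f z (v 2)
    · right
      obtain ⟨f, _, hc⟩ := hcase
      exact (mem_Vset _ z).2 (cert_sound hc)
    · left
      exact hcase
  have hΦ2R := (hj.2 certBoundFml v hvr).1 hΦ2L
  rw [satIn_certBoundFml] at hΦ2R
  have hsub2 : ∀ t, t ∈ Vset ((j o').rank) → t ∈ j (Vset o'.rank) := by
    intro t ht
    have htr : t.rank < (j o').rank := (mem_Vset _ t).1 ht
    obtain ⟨F, hF, hFr⟩ := cert_complete hjord htr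
    rcases hΦ2R t (lt_trans htr hjro') with hno | hyes
    · exact absurd ⟨F, lt_of_le_of_lt hFr (succ3_lt hmu (htr.trans hjro')), hF⟩ hno
    · exact hyes
  exact ZFSet.ext fun t => ⟨hsub1 t, hsub2 t⟩

theorem jfix {lam mu : Ordinal.{u}} {j : ZFSet.{u} → ZFSet.{u}} (hj : VElemEmb lam mu j)
    (hlam : Order.IsSuccLimit lam) (hmu : Order.IsSuccLimit mu) {κ : Ordinal.{u}} (hκ : κ < lam)
    (hfixo : ∀ o : ZFSet.{u}, IsOrd o → o.rank < κ → j o = o) :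
    ∀ x : ZFSet.{u}, x.rank < κ → j x = x := by
  have key : ∀ β : Ordinal.{u}, ∀ x : ZFSet.{u}, x.rank = β → β < κ → j x = x := by
    intro β
    induction β using Ordinal.induction with
    | h β ih =>
      intro x hxr hβ
      have hxκ : x.rank < κ := hxr ▸ hβ
      have hxlam : x.rank < lam := lt_trans hxκ hκ
      have hmem_fix : ∀ y, y ∈ x → j y = y := fun y hy =>
        ih y.rank (hxr ▸ ZFSet.rank_lt_of_mem hy) y rfl
          (lt_trans (hxr ▸ ZFSet.rank_lt_of_mem hy) hβ)
      have hjo : j (ovn β) = ovn β :=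
        hfixo _ (isOrd_ovn β) (by rw [rank_ovn]; exact hβ)
      have hVβ : j (Vset β) = Vset β := by
        have hcore := jVset_core hj hlam hmu (isOrd_ovn β)
          (by rw [rank_ovn]; exact lt_trans hβ hκ)
        rwa [rank_ovn, hjo, rank_ovn] at hcore
      apply ZFSet.ext
      intro z
      constructor
      · intro hz
        have hxw : x ⊆ Vset β := ZFSet.subset_def.2 fun z' hz' =>
          (mem_Vset _ _).2 (hxr ▸ ZFSet.rank_lt_of_mem hz')
        have hVr : (Vset β).rank < lam :=
          lt_of_le_of_lt (rank_Vset_le β) (lt_trans hβ hκ)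
        have hjsub : j x ⊆ j (Vset β) := je_sub hj hlam.pos hxlam hVr hxw
        have hzV : z ∈ Vset β := hVβ ▸ hjsub hz
        have hzr : z.rank < β := (mem_Vset _ _).1 hzV
        have hjz : j z = z := ih z.rank hzr z rfl (lt_trans hzr hβ)
        have hjm : j z ∈ j x := hjz.symm ▸ hz
        exact (je_mem hj (lt_trans (lt_trans hzr hβ) hκ) hxlam).2 hjm
      · intro hz
        have hjm := (je_mem hj (lt_trans (hxr ▸ ZFSet.rank_lt_of_mem hz) hxlam)
          hxlam).1 hz
        rwa [hmem_fix z hz] at hjm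
  exact fun x hx => key x.rank x rfl hx

/-- The full package extracted from `C(n)`-extendibility, for a fully reflecting level
above any given `θ`. -/
theorem embedding_package (n : ℕ) (κ : Ordinal.{u}) (h : IsCnExtendible n κ)
    (θ : Ordinal.{u}) :
    ∃ (lam mu kstar : Ordinal.{u}) (j : ZFSet.{u} → ZFSet.{u}),
      θ < lam ∧ κ < lam ∧ Order.IsSuccLimit lam ∧
      (∀ (φ : SetFml) (v : ℕ → ZFSet.{u}), (∀ i, (v i).rank < lam) →
        (φ.Sat v ↔ φ.SatIn (MemV lam) v)) ∧
      CC n mu ∧ VElemEmb lam mu j ∧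
      (∀ x : ZFSet.{u}, x.rank < κ → j x = x) ∧
      j (Vset κ) = Vset kstar ∧
      lam < kstar ∧ kstar < mu := by
  obtain ⟨hCCκ, hext⟩ := h
  set θ' := max θ κ with hθ'
  set lam := Lam θ' with hlam
  have hθlam : θ < lam := lt_of_le_of_lt (le_max_left _ _) (lt_lam θ')
  have hκlam : κ < lam := lt_of_le_of_lt (le_max_right _ _) (lt_lam θ')
  have hlam_lim : Order.IsSuccLimit lam := isInfCardO_isLimit (lam_isInfCard θ')
  obtain ⟨mu, j, k, hCCmu, hj, hkord, hkrank, hfixo, _, hlamjk, _⟩ :=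
    hext lam (lam_CC θ' n) hκlam
  have hmu_lim : Order.IsSuccLimit mu := isInfCardO_isLimit hCCmu.1
  have hkr_lam : k.rank < lam := hkrank ▸ hκlam
  refine ⟨lam, mu, (j k).rank, j, hθlam, hκlam, hlam_lim, fun φ v hv => lam_reflects θ' φ v hv,
    hCCmu, hj, jfix hj hlam_lim hmu_lim hκlam hfixo, ?_, hlamjk, hj.1 k hkr_lam⟩
  have hcore := jVset_core hj hlam_lim hmu_lim hkord hkr_lam
  rwa [hkrank] at hcore

/-! ### The main argument -/

def listSup : List ZFSet.{u} → Ordinal.{u}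
  | [] => 0
  | x :: xs => max x.rank (listSup xs)

theorem le_listSup : ∀ (xs : List ZFSet.{u}) (x : ZFSet.{u}), x ∈ xs → x.rank ≤ listSup xs := by
  intro xs
  induction xs with
  | nil => intro x hx; simp at hx
  | cons y ys ih =>
    intro x hx
    rcases List.mem_cons.1 hx with rfl | hx
    · exact le_max_left _ _
    · exact le_trans (ih x hx) (le_max_right _ _)

theorem blockAll_up (n : ℕ) (κ : Ordinal.{u}) (h : IsCnExtendible n κ)
    {χ : SetFml} (hχ : IsSigma n χ) (m' : ℕ) (v : ℕ → ZFSet.{u}) (hv : ∀ i, (v i).rank < κ)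
    (H : ∀ xs : List ZFSet.{u}, xs.length = m' → (∀ x ∈ xs, x.rank < κ) → χ.Sat (pushL v xs)) :
    ∀ xs : List ZFSet.{u}, xs.length = m' → χ.Sat (pushL v xs) := by
  by_contra hc
  push_neg at hc
  obtain ⟨xs, hlen, hns⟩ := hc
  obtain ⟨lam, mu, kstar, j, hθlam, hκlam, hlam_lim, hfull, hCCmu, hj, hjfix, hjV, hlamk, hkmu⟩ :=
    embedding_package n κ h (max κ (listSup xs))
  have hxs_lam : ∀ x ∈ xs, x.rank < lam := fun x hx =>
    lt_of_le_of_lt (le_trans (le_listSup xs x hx) (le_max_right _ _)) hθlam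
  set N := vbnd χ with hN
  set vs : ℕ → ZFSet.{u} := fun i => if i = N then Vset κ else v i with hvs
  have hvsN : vs N = Vset κ := by rw [hvs]; simp
  have hvs_lam : ∀ i, (vs i).rank < lam := by
    intro i
    rw [hvs]
    dsimp only
    split
    · exact lt_of_le_of_lt (rank_Vset_le κ) hκlam
    · exact lt_trans (hv i) hκlam
  have hagree : ∀ i, i < N → vs i = v i := by
    intro i hi
    rw [hvs]
    dsimp only
    rw [if_neg (by omega)]
  -- Step 1 : the relativized block statement holds in V_lam
  have hstep1 : SetFml.SatIn (MemV lam) (ballify N m' χ) vs := by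
    rw [satIn_ballify]
    intro xs' hlen' hmem
    have hxs'κ : ∀ x ∈ xs', x.rank < κ := by
      intro x hx
      have hm := hmem x hx
      rw [hvsN] at hm
      exact (mem_Vset κ x).1 hm
    have hsat : χ.Sat (pushL v xs') := H xs' hlen' hxs'κ
    have hagree' := pushL_agree xs' N hagree
    have hsat' : χ.Sat (pushL vs xs') :=
      (satIn_agree _ χ fun i hi => (hagree' i (by omega)).symm).1 hsat
    exact (hfull χ (pushL vs xs')
      (pushL_rank hvs_lam xs' fun x hx => lt_trans (hxs'κ x hx) hκlam)).1 hsat'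
  -- Step 2 : transfer along j
  have hstep2 := (hj.2 (ballify N m' χ) vs hvs_lam).1 hstep1
  rw [satIn_ballify] at hstep2
  -- Step 3 : apply to the counterexample tuple
  have hmemk : ∀ x ∈ xs, x ∈ (fun n => j (vs n)) N := by
    intro x hx
    show x ∈ j (vs N)
    rw [hvsN, hjV]
    exact (mem_Vset kstar x).2 (lt_trans (hxs_lam x hx) hlamk)
  have hstep3 := hstep2 xs hlen hmemk
  -- Step 4 : agreement back to v
  have hagreeJ : ∀ i, i < N → (fun n => j (vs n)) i = v i := by
    intro i hi
    show j (vs i) = v i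
    rw [hagree i hi]
    exact hjfix (v i) (hv i)
  have hstep4 : SetFml.SatIn (MemV mu) χ (pushL v xs) :=
    (satIn_agree _ χ fun i hi => (pushL_agree xs N hagreeJ i (by omega))).1 hstep3
  -- Step 5 : descend to truth in V via CC n mu
  have hranks : ∀ i, ((pushL v xs) i).rank < mu :=
    pushL_rank (fun i => lt_trans (hv i) (lt_trans hκlam (lt_trans hlamk hkmu)))
      xs (fun x hx => lt_trans (hxs_lam x hx) (lt_trans hlamk hkmu))
  exact hns ((hCCmu.2 χ hχ (pushL v xs) hranks).2 hstep4)

theorem piAbs (n : ℕ) (κ : Ordinal.{u}) (h : IsCnExtendible n κ) {χ : SetFml}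
    (hχ : IsSigma n χ) (m' : ℕ) (w : ℕ → ZFSet.{u}) (hw : ∀ i, (w i).rank < κ) :
    SetFml.SatIn (MemV κ) (iterAll m' χ) w ↔ (iterAll m' χ).Sat w := by
  constructor
  · intro hh
    have hH : ∀ xs : List ZFSet.{u}, xs.length = m' → (∀ x ∈ xs, x.rank < κ) →
        χ.Sat (pushL w xs) := by
      intro xs hlen hr
      have hin := (satIn_iterAll (MemV κ) χ m' w).1 hh xs hlen (fun x hx => hr x hx)
      exact (h.1.2 χ hχ (pushL w xs) (pushL_rank hw xs hr)).2 hin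
    have hall := blockAll_up n κ h hχ m' w hw hH
    exact (satIn_iterAll (fun _ => True) χ m' w).2 fun xs hlen _ => hall xs hlen
  · intro hh
    refine (satIn_iterAll (MemV κ) χ m' w).2 fun xs hlen hM => ?_
    have hsat := (satIn_iterAll (fun _ => True) χ m' w).1 hh xs hlen (fun x _ => trivial)
    exact (h.1.2 χ hχ (pushL w xs) (pushL_rank hw xs fun x hx => hM x hx)).1 hsat

theorem blockEx_down (n : ℕ) (κ : Ordinal.{u}) (h : IsCnExtendible n κ) {χ : SetFml}
    (hχ : IsSigma n χ) (m m' : ℕ) (v : ℕ → ZFSet.{u}) (hv : ∀ i, (v i).rank < κ)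
    (xs : List ZFSet.{u}) (hlen : xs.length = m)
    (hsat : (iterAll m' χ).Sat (pushL v xs)) :
    ∃ xs' : List ZFSet.{u}, xs'.length = m ∧ (∀ x ∈ xs', x.rank < κ) ∧
      (iterAll m' χ).Sat (pushL v xs') := by
  obtain ⟨lam, mu, kstar, j, hθlam, hκlam, hlam_lim, hfull, hCCmu, hj, hjfix, hjV, hlamk, hkmu⟩ :=
    embedding_package n κ h (max κ (listSup xs))
  have hxs_lam : ∀ x ∈ xs, x.rank < lam := fun x hx =>
    lt_of_le_of_lt (le_trans (le_listSup xs x hx) (le_max_right _ _)) hθlam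
  set ψ := iterAll m' χ with hψ
  set N := vbnd ψ with hN
  set vs : ℕ → ZFSet.{u} := fun i => if i = N then Vset κ else v i with hvs
  have hvsN : vs N = Vset κ := by rw [hvs]; simp
  have hvs_lam : ∀ i, (vs i).rank < lam := by
    intro i
    rw [hvs]
    dsimp only
    split
    · exact lt_of_le_of_lt (rank_Vset_le κ) hκlam
    · exact lt_trans (hv i) hκlam
  have hagree : ∀ i, i < N → vs i = v i := by
    intro i hi
    rw [hvs]
    dsimp only
    rw [if_neg (by omega)]
  have hagreeJ : ∀ i, i < N → v i = (fun n => j (vs n)) i := by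
    intro i hi
    show v i = j (vs i)
    rw [hagree i hi, hjfix (v i) (hv i)]
  -- Step A : the relativized existential block holds in V_mu
  have hA : SetFml.SatIn (MemV mu) (bexify N m ψ) (fun n => j (vs n)) := by
    rw [satIn_bexify]
    refine ⟨xs, hlen, ?_, ?_⟩
    · intro x hx
      show x ∈ j (vs N)
      rw [hvsN, hjV]
      exact (mem_Vset kstar x).2 (lt_trans (hxs_lam x hx) hlamk)
    · have hcore : SetFml.SatIn (MemV mu) ψ (pushL v xs) := by
        rw [hψ, satIn_iterAll]
        intro ys hlen' hM
        have hs := (satIn_iterAll (fun _ => True) χ m' (pushL v xs)).1 hsat ys hlen'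
          (fun _ _ => trivial)
        have hranks : ∀ i, ((pushL (pushL v xs) ys) i).rank < mu :=
          pushL_rank (pushL_rank
            (fun i => lt_trans (hv i) (lt_trans hκlam (lt_trans hlamk hkmu)))
            xs (fun x hx => lt_trans (hxs_lam x hx) (lt_trans hlamk hkmu)))
            ys (fun y hy => hM y hy)
        exact (hCCmu.2 χ hχ (pushL (pushL v xs) ys) hranks).1 hs
      exact (satIn_agree _ ψ fun i hi => pushL_agree xs N hagreeJ i (by omega)).1 hcore
  -- Step B : pull back along j
  have hB := (hj.2 (bexify N m ψ) vs hvs_lam).2 hA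
  rw [satIn_bexify] at hB
  obtain ⟨xs', hlen', hmem', hsat'⟩ := hB
  have hxs'κ : ∀ x ∈ xs', x.rank < κ := by
    intro x hx
    have hm := hmem' x hx
    rw [hvsN] at hm
    exact (mem_Vset κ x).1 hm
  have hsat2 : SetFml.SatIn (MemV lam) ψ (pushL v xs') :=
    (satIn_agree _ ψ fun i hi =>
      (pushL_agree xs' N (fun i hi => (hagree i hi).symm) i (by omega)).symm).1 hsat'
  have hranks : ∀ i, ((pushL v xs') i).rank < lam :=
    pushL_rank (fun i => lt_trans (hv i) hκlam) xs'
      (fun x hx => lt_trans (hxs'κ x hx) hκlam)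
  exact ⟨xs', hlen', hxs'κ, (hfull ψ (pushL v xs') hranks).2 hsat2⟩

/-- **Lemma.**  For every `n < ω`, if `κ` is a `C(n)`-extendible cardinal, then
`κ ∈ C(n+2)`, i.e. `V_κ` is a `Σ_{n+2}`-elementary substructure of `V`. -/
theorem CnExtendible_mem_Cn_add_two (n : ℕ) (κ : Ordinal.{u})
    (h : IsCnExtendible n κ) : CC (n + 2) κ := by
  obtain ⟨hCCκ, hext⟩ := h
  refine ⟨hCCκ.1, ?_⟩
  intro φ hφ v hv
  have hφ' : ∃ (m : ℕ) (ψ : SetFml), IsPi (n + 1) ψ ∧ φ = iterEx m ψ := hφ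
  obtain ⟨m, ψ, hψ, rfl⟩ := hφ'
  have hψ' : ∃ (m' : ℕ) (χ : SetFml), IsSigma n χ ∧ ψ = iterAll m' χ := hψ
  obtain ⟨m', χ, hχ, rfl⟩ := hψ'
  constructor
  · intro hsat
    obtain ⟨xs, hlen, -, hs⟩ :=
      (satIn_iterEx (fun _ => True) (iterAll m' χ) m v).1 hsat
    obtain ⟨xs', hlen', hκ', hs'⟩ :=
      blockEx_down n κ ⟨hCCκ, hext⟩ hχ m m' v hv xs hlen hs
    refine (satIn_iterEx (MemV κ) (iterAll m' χ) m v).2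
      ⟨xs', hlen', fun x hx => hκ' x hx, ?_⟩
    exact (piAbs n κ ⟨hCCκ, hext⟩ hχ m' (pushL v xs')
      (pushL_rank hv xs' hκ')).2 hs'
  · intro hsat
    obtain ⟨xs, hlen, hM, hs⟩ :=
      (satIn_iterEx (MemV κ) (iterAll m' χ) m v).1 hsat
    have hxsκ : ∀ x ∈ xs, x.rank < κ := fun x hx => hM x hx
    have hS := (piAbs n κ ⟨hCCκ, hext⟩ hχ m' (pushL v xs)
      (pushL_rank hv xs hxsκ)).1 hs
    exact (satIn_iterEx (fun _ => True) (iterAll m' χ) m v).2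
      ⟨xs, hlen, fun _ _ => trivial, hS⟩


end ZFCMeta
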